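/- For k ≥ 1, complex tuples μ = (μ_1,…,μ_k), complex r, s, and any nonnegative integer tuple t = (t_1,…,t_k), the multiparameter Fuss–Catalan numbers satisfy 𝒜_t(μ, r+s) = ∑_{u ≤ t} 𝒜_u(μ, r) · 𝒜_{t-u}(μ, s), where the sum is over tuples u with 0 ≤ u_i ≤ t_i componentwise. -/

import Mathlib

/-- Multiparameter Fuss–Catalan number `𝒜_t(μ, r)`:
`𝒜_0 = 1` and for `|t| > 0`, `𝒜_t(μ, r) = (r/(t_1!⋯t_k!)) ∏_{j=1}^{|t|-1}(t·μ + r - j)`. -/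
noncomputable def mfc {k : ℕ} (μ : Fin k → ℂ) (r : ℂ) (t : Fin k → ℕ) : ℂ :=
  if (∑ i, t i) = 0 then 1
  else r / (∏ i, ((t i).factorial : ℂ)) *
    ∏ j ∈ Finset.Icc 1 ((∑ i, t i) - 1), ((∑ i, (t i : ℂ) * μ i) + r - (j : ℂ))

section Aux
open Finset
variable {k : ℕ} (μ : Fin k → ℂ)

lemma mfc_base (r : ℂ) {t : Fin k → ℕ} (h : ∑ i, t i = 0) : mfc μ r t = 1 := if_pos h

lemma mfc_zero {t : Fin k → ℕ} (h : ∑ i, t i ≠ 0) : mfc μ 0 t = 0 := by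
  simp [mfc, h]

lemma sub_single_eq_update (t : Fin k → ℕ) (i : Fin k) :
    t - Pi.single i 1 = Function.update t i (t i - 1) := by
  funext l
  rcases eq_or_ne l i with rfl | h
  · simp
  · simp [Pi.single_apply, h, Function.update_of_ne h]

variable {t : Fin k → ℕ} {i : Fin k}

lemma sum_sub_single (h : t i ≠ 0) :
    ∑ l, (t - Pi.single i 1 : Fin k → ℕ) l = (∑ l, t l) - 1 := by
  rw [sub_single_eq_update, Finset.sum_update_of_mem (Finset.mem_univ i)]
  have h2 : ∑ l, t l = t i + ∑ l ∈ Finset.univ \ {i}, t l :=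
    Finset.sum_eq_add_sum_sdiff_singleton_of_mem (Finset.mem_univ i) _
  omega

lemma csum_sub_single (h : t i ≠ 0) :
    ∑ l, (((t - Pi.single i 1 : Fin k → ℕ) l : ℂ)) * μ l = (∑ l, (t l : ℂ) * μ l) - μ i := by
  rw [sub_single_eq_update]
  have h2 : ∑ l, (t l : ℂ) * μ l
      = (t i : ℂ) * μ i + ∑ l ∈ Finset.univ \ {i}, (t l : ℂ) * μ l :=
    Finset.sum_eq_add_sum_sdiff_singleton_of_mem (Finset.mem_univ i) _
  have h3 : ∑ l, ((Function.update t i (t i - 1) l : ℂ) * μ l)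
      = ((t i - 1 : ℕ) : ℂ) * μ i + ∑ l ∈ Finset.univ \ {i}, (t l : ℂ) * μ l := by
    rw [Finset.sum_eq_add_sum_sdiff_singleton_of_mem (Finset.mem_univ i)
      (fun l => (Function.update t i (t i - 1) l : ℂ) * μ l)]
    simp only [Function.update_self]
    congr 1
    refine Finset.sum_congr rfl fun l hl => ?_
    rw [Function.update_of_ne (by simpa using (Finset.mem_sdiff.mp hl).2)]
  rw [h3, h2]
  have : ((t i - 1 : ℕ) : ℂ) = (t i : ℂ) - 1 := by
    have := Nat.cast_sub (Nat.one_le_iff_ne_zero.mpr h) (R := ℂ)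
    simpa using this
  rw [this]; ring

lemma prod_fact_sub_single (h : t i ≠ 0) :
    (t i : ℂ) * ∏ l, ((((t - Pi.single i 1 : Fin k → ℕ) l).factorial : ℂ))
      = ∏ l, ((t l).factorial : ℂ) := by
  rw [sub_single_eq_update]
  have h2 : ∏ l, ((t l).factorial : ℂ)
      = ((t i).factorial : ℂ) * ∏ l ∈ Finset.univ \ {i}, ((t l).factorial : ℂ) :=
    Finset.prod_eq_mul_prod_sdiff_singleton_of_mem (Finset.mem_univ i) _
  have h3 : ∏ l, (((Function.update t i (t i - 1) l).factorial : ℂ))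
      = (((t i - 1).factorial : ℂ)) * ∏ l ∈ Finset.univ \ {i}, ((t l).factorial : ℂ) := by
    rw [Finset.prod_eq_mul_prod_sdiff_singleton_of_mem (Finset.mem_univ i)
      (fun l => ((Function.update t i (t i - 1) l).factorial : ℂ))]
    simp only [Function.update_self]
    congr 1
    refine Finset.prod_congr rfl fun l hl => ?_
    rw [Function.update_of_ne (by simpa using (Finset.mem_sdiff.mp hl).2)]
  rw [h3, h2, ← mul_assoc]
  congr 1
  rw [← Nat.cast_mul, Nat.mul_factorial_pred h]

lemma prod_fact_ne_zero : (∏ l, ((t l).factorial : ℂ)) ≠ 0 :=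
  Finset.prod_ne_zero_iff.mpr fun l _ => Nat.cast_ne_zero.mpr (Nat.factorial_ne_zero _)

end Aux

section Rec
open Finset
variable {k : ℕ} (μ : Fin k → ℂ)

lemma icc_insert_left {n : ℕ} (hn : 2 ≤ n) :
    Finset.Icc 1 (n-1) = insert 1 (Finset.Icc 2 (n-1)) := by
  ext j; simp only [Finset.mem_Icc, Finset.mem_insert]; omega

lemma icc_insert_right {n : ℕ} (hn : 2 ≤ n) :
    Finset.Icc 2 n = insert n (Finset.Icc 2 (n-1)) := by
  ext j; simp only [Finset.mem_Icc, Finset.mem_insert]; omega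

lemma prod_shift (g : ℕ → ℂ) (a b : ℕ) :
    ∏ j ∈ Finset.Icc a b, g (j + 1) = ∏ j ∈ Finset.Icc (a+1) (b+1), g j := by
  rw [← Finset.map_add_right_Icc a b 1, Finset.prod_map]
  rfl

lemma mfc_rec (x : ℂ) (t : Fin k → ℕ) :
    mfc μ x t = mfc μ (x - 1) t
      + ∑ i, (if t i = 0 then 0 else mfc μ (x + μ i - 1) (t - Pi.single i 1)) := by
  set n := ∑ i, t i with hn
  rcases Nat.lt_or_ge n 1 with h0 | h1
  · -- n = 0
    have hn0 : n = 0 := by omega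
    have hs : ∑ i, t i = 0 := by rw [← hn]; exact hn0
    have ht : ∀ i, t i = 0 := fun i => Finset.sum_eq_zero_iff.mp hs i (Finset.mem_univ i)
    rw [mfc_base μ _ hn0, mfc_base μ _ hn0]
    simp [ht]
  rcases Nat.lt_or_ge n 2 with h2 | h2
  · -- n = 1
    have hn1 : n = 1 := by omega
    have htle : ∀ l, t l ≤ 1 := fun l => hn1 ▸ (Finset.single_le_sum (f := t) (fun _ _ => Nat.zero_le _) (Finset.mem_univ l))
    have hD : (∏ l, ((t l).factorial : ℂ)) = 1 := by
      rw [Finset.prod_eq_one]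
      intro l _
      rcases Nat.le_one_iff_eq_zero_or_eq_one.mp (htle l) with h | h <;> simp [h]
    obtain ⟨i0, hi0⟩ : ∃ i0, t i0 ≠ 0 := by
      by_contra hc
      push_neg at hc
      have hs : ∑ i, t i = 0 := Finset.sum_eq_zero fun i _ => hc i
      rw [← hn] at hs
      omega
    have hsum : ∑ i, (if t i = 0 then 0 else mfc μ (x + μ i - 1) (t - Pi.single i 1)) = 1 := by
      rw [Finset.sum_eq_single i0]
      · rw [if_neg hi0, mfc_base]
        rw [sum_sub_single hi0]; omega
      · intro l _ hl
        have : t l = 0 := by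
          by_contra hc
          have h2 : 2 ≤ ∑ i, t i := by
            calc 2 = 1 + 1 := rfl
            _ ≤ t i0 + t l := Nat.add_le_add (Nat.one_le_iff_ne_zero.mpr hi0) (Nat.one_le_iff_ne_zero.mpr hc)
            _ ≤ ∑ i, t i := by
                have := Finset.add_sum_erase Finset.univ t (Finset.mem_univ i0)
                have hmem : l ∈ Finset.univ.erase i0 := Finset.mem_erase.mpr ⟨hl, Finset.mem_univ l⟩
                have := Finset.single_le_sum (f := t) (fun _ _ => Nat.zero_le _) hmem
                calc t i0 + t l ≤ t i0 + ∑ i ∈ Finset.univ.erase i0, t i := by omega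
                  _ = ∑ i, t i := Finset.add_sum_erase Finset.univ t (Finset.mem_univ i0)
          omega
        simp [this]
      · simp
    rw [hsum, mfc, mfc, if_neg (by omega : ¬ n = 0), if_neg (by omega : ¬ n = 0), hD]
    rw [show n - 1 = 0 from by omega]
    simp only [Finset.Icc_eq_empty_of_lt (by omega : (0:ℕ) < 1), Finset.prod_empty, hD]
    ring
  · -- n ≥ 2
    have hne : n ≠ 0 := by omega
    set c := ∑ i, (t i : ℂ) * μ i with hc
    set D := ∏ l, ((t l).factorial : ℂ) with hD
    have hD0 : D ≠ 0 := prod_fact_ne_zero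
    set A := ∏ j ∈ Finset.Icc 2 (n-1), (c + x - (j:ℂ)) with hA
    have f1 : ∏ j ∈ Finset.Icc 1 (n-1), (c + x - (j:ℂ)) = (c + x - 1) * A := by
      rw [icc_insert_left h2, Finset.prod_insert (by simp)]
      norm_num
      exact Or.inl rfl
    have f2 : ∏ j ∈ Finset.Icc 1 (n-1), (c + (x-1) - (j:ℂ)) = (c + x - (n:ℂ)) * A := by
      have e1 : ∀ j : ℕ, c + (x-1) - (j:ℂ) = c + x - ((j+1 : ℕ):ℂ) := by
        intro j; push_cast; ring
      calc ∏ j ∈ Finset.Icc 1 (n-1), (c + (x-1) - (j:ℂ))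
          = ∏ j ∈ Finset.Icc 1 (n-1), (c + x - ((j+1:ℕ):ℂ)) := Finset.prod_congr rfl fun j _ => e1 j
        _ = ∏ j ∈ Finset.Icc 2 n, (c + x - (j:ℂ)) := by
            rw [prod_shift (fun j => c + x - (j:ℂ)) 1 (n-1), show n - 1 + 1 = n from by omega]
        _ = (c + x - (n:ℂ)) * A := by
            rw [icc_insert_right h2, Finset.prod_insert (by simp; omega)]
    have f3 : ∀ i, t i ≠ 0 → mfc μ (x + μ i - 1) (t - Pi.single i 1)
        = (t i : ℂ) * (x + μ i - 1) / D * A := by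
      intro i hi
      rw [mfc, if_neg (by rw [sum_sub_single hi]; omega)]
      rw [sum_sub_single hi, csum_sub_single μ hi]
      have e1 : ∀ j : ℕ, c - μ i + (x + μ i - 1) - (j:ℂ) = c + x - ((j+1:ℕ):ℂ) := by
        intro j; push_cast; ring
      have eP : ∏ j ∈ Finset.Icc 1 (n - 1 - 1), (c - μ i + (x + μ i - 1) - (j:ℂ)) = A := by
        calc ∏ j ∈ Finset.Icc 1 (n-1-1), (c - μ i + (x + μ i - 1) - (j:ℂ))
            = ∏ j ∈ Finset.Icc 1 (n-1-1), (c + x - ((j+1:ℕ):ℂ)) := Finset.prod_congr rfl fun j _ => e1 j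
          _ = ∏ j ∈ Finset.Icc 2 (n-1), (c + x - (j:ℂ)) := by
              rw [prod_shift (fun j => c + x - (j:ℂ)) 1 (n-1-1), show n - 1 - 1 + 1 = n - 1 from by omega]
          _ = A := rfl
      rw [eP]
      congr 1
      have hfac := prod_fact_sub_single (t := t) (i := i) hi
      have hD1 : (∏ l, ((((t - Pi.single i 1 : Fin k → ℕ) l).factorial : ℂ))) ≠ 0 := prod_fact_ne_zero
      rw [div_eq_div_iff hD1 hD0, hD, ← hfac]
      ring
    have hsum : ∑ i, (if t i = 0 then 0 else mfc μ (x + μ i - 1) (t - Pi.single i 1))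
        = ((n:ℂ) * (x - 1) + c) / D * A := by
      have step : ∀ i, (if t i = 0 then 0 else mfc μ (x + μ i - 1) (t - Pi.single i 1))
          = (t i : ℂ) * (x + μ i - 1) / D * A := by
        intro i
        by_cases hi : t i = 0
        · simp [hi]
        · rw [if_neg hi, f3 i hi]
      rw [Finset.sum_congr rfl fun i _ => step i]
      have hn' : ∑ i, (t i : ℂ) = (n : ℂ) := by rw [hn]; push_cast; rfl
      have e2 : ∑ i, (t i : ℂ) * (x + μ i - 1) = (n:ℂ) * (x - 1) + c := by
        have : ∀ i, (t i : ℂ) * (x + μ i - 1) = (t i : ℂ) * (x - 1) + (t i : ℂ) * μ i := by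
          intro i; ring
        rw [Finset.sum_congr rfl fun i _ => this i, Finset.sum_add_distrib,
          ← Finset.sum_mul, hn', hc]
      rw [← e2, Finset.sum_div, Finset.sum_mul]
    rw [mfc, mfc, if_neg hne, if_neg hne, f1, f2, hsum]
    rw [← hD]
    field_simp
    ring

end Rec

section Poly
open Finset Polynomial
variable {k : ℕ} (μ : Fin k → ℂ)

/-- Polynomial (in `s`) whose evaluation at `s` is `mfc μ (a + s) t`. -/
noncomputable def mp (a : ℂ) (t : Fin k → ℕ) : Polynomial ℂ :=
  if (∑ i, t i) = 0 then 1
  else Polynomial.C ((∏ i, ((t i).factorial : ℂ))⁻¹) * (Polynomial.C a + Polynomial.X) *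
    ∏ j ∈ Finset.Icc 1 ((∑ i, t i) - 1),
      (Polynomial.C ((∑ i, (t i : ℂ) * μ i) + a - (j : ℂ)) + Polynomial.X)

lemma mp_eval (a s : ℂ) (t : Fin k → ℕ) : (mp μ a t).eval s = mfc μ (a + s) t := by
  by_cases h : (∑ i, t i) = 0
  · simp [mp, mfc, h]
  · rw [mp, mfc, if_neg h, if_neg h]
    simp only [eval_mul, eval_add, eval_C, eval_X, eval_prod]
    rw [div_eq_mul_inv]
    congr 1
    · ring
    · exact Finset.prod_congr rfl fun j _ => by ring

lemma poly_eval_const (Q : Polynomial ℂ) (h : ∀ s : ℂ, Q.eval s = Q.eval (s - 1)) (s : ℂ) :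
    Q.eval s = Q.eval 0 := by
  have hm : ∀ m : ℕ, Q.eval (m : ℂ) = Q.eval 0 := by
    intro m
    induction m with
    | zero => simp
    | succ p ih =>
        have h2 := h ((p + 1 : ℕ) : ℂ)
        rw [show (((p + 1 : ℕ) : ℂ) - 1) = ((p : ℕ) : ℂ) by push_cast; ring] at h2
        rw [h2, ih]
  set R := Q - Polynomial.C (Q.eval 0) with hR
  have hroot : ∀ m : ℕ, R.IsRoot (m : ℂ) := fun m => by
    simp [hR, Polynomial.IsRoot, hm m]
  have hRz : R = 0 := by
    apply Polynomial.eq_zero_of_infinite_isRoot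
    apply Set.infinite_of_injective_forall_mem (f := fun m : ℕ => (m : ℂ))
      (hi := Nat.cast_injective) (hf := hroot)
  have h3 := congrArg (Polynomial.eval s) hRz
  simp only [hR, eval_sub, eval_C, eval_zero] at h3
  exact sub_eq_zero.mp h3

lemma sub_sub_single_comm (t u : Fin k → ℕ) (i : Fin k) :
    (t - u) - Pi.single i 1 = (t - Pi.single i 1) - u := by
  funext l
  simp only [Pi.sub_apply]
  omega

lemma sum_Iic_sub_single {t : Fin k → ℕ} {i : Fin k} (hi : t i ≠ 0) (F : (Fin k → ℕ) → ℂ) :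
    ∑ u ∈ Finset.Iic t, (if (t - u) i = 0 then 0 else F u)
      = ∑ u ∈ Finset.Iic (t - Pi.single i 1), F u := by
  have happ : ∀ l, (t - Pi.single i 1 : Fin k → ℕ) l = if l = i then t i - 1 else t l := by
    intro l
    by_cases hl : l = i
    · subst hl; simp
    · simp [Pi.single_apply, hl]
  have hsub : Finset.Iic (t - Pi.single i 1) ⊆ Finset.Iic t := by
    intro u hu
    rw [Finset.mem_Iic] at *
    intro l
    have h1 := hu l
    rw [happ l] at h1
    split_ifs at h1 with hl
    · subst hl; exact le_trans h1 (Nat.sub_le _ _)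
    · exact h1
  have hvan : ∀ u ∈ Finset.Iic t, u ∉ Finset.Iic (t - Pi.single i 1) →
      (if (t - u) i = 0 then 0 else F u) = 0 := by
    intro u hu hnu
    rw [Finset.mem_Iic] at hu hnu
    have hui : t i ≤ u i := by
      by_contra hc
      apply hnu
      intro l
      rw [happ l]
      split_ifs with hl
      · subst hl; exact Nat.le_pred_of_lt (Nat.lt_of_not_le hc)
      · exact hu l
    rw [if_pos (by rw [Pi.sub_apply]; omega)]
  rw [← Finset.sum_subset hsub hvan]
  apply Finset.sum_congr rfl
  intro u hu
  rw [Finset.mem_Iic] at hu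
  have h1 := hu i
  rw [happ i, if_pos rfl] at h1
  have h2 : u i ≤ t i - 1 := h1
  rw [if_neg (by rw [Pi.sub_apply]; omega)]

end Poly


/-- Multiparameter convolution identity:
`𝒜_t(μ, r+s) = ∑_{0 ≤ u ≤ t} 𝒜_u(μ, r) · 𝒜_{t-u}(μ, s)` (componentwise `u ≤ t`). -/
theorem mfc_convolution {k : ℕ} (hk : 1 ≤ k) (μ : Fin k → ℂ) (r s : ℂ)
    (t : Fin k → ℕ) :
    mfc μ (r + s) t = ∑ u ∈ Finset.Iic t, mfc μ r u * mfc μ s (t - u) := by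
  suffices H : ∀ n (t : Fin k → ℕ), (∑ i, t i) = n → ∀ s : ℂ,
      mfc μ (r + s) t = ∑ u ∈ Finset.Iic t, mfc μ r u * mfc μ s (t - u) from H _ t rfl s
  intro n
  induction n using Nat.strong_induction_on with
  | _ n IH =>
  intro t htn s
  have h0 : ∑ u ∈ Finset.Iic t, mfc μ r u * mfc μ 0 (t - u) = mfc μ (r + 0) t := by
    rw [add_zero, Finset.sum_eq_single t]
    · have hz : (∑ l, (t - t : Fin k → ℕ) l) = 0 := by
        apply Finset.sum_eq_zero; intro l _; simp [Pi.sub_apply]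
      rw [mfc_base μ 0 hz, mul_one]
    · intro u hu hne
      rw [Finset.mem_Iic] at hu
      have hnz : (∑ l, (t - u : Fin k → ℕ) l) ≠ 0 := by
        intro hc
        apply hne
        funext l
        have h1 := Finset.sum_eq_zero_iff.mp hc l (Finset.mem_univ l)
        have h2 : u l ≤ t l := hu l
        rw [Pi.sub_apply] at h1
        omega
      rw [mfc_zero μ hnz, mul_zero]
    · intro hc
      exact absurd (Finset.mem_Iic.mpr le_rfl) hc
  have key : ∀ s' : ℂ,
      (∑ u ∈ Finset.Iic t, mfc μ r u * mfc μ s' (t - u)) - mfc μ (r + s') t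
      = (∑ u ∈ Finset.Iic t, mfc μ r u * mfc μ (s' - 1) (t - u)) - mfc μ (r + (s' - 1)) t := by
    intro s'
    have main : ∑ u ∈ Finset.Iic t, mfc μ r u *
          (∑ i, if (t - u : Fin k → ℕ) i = 0 then 0
            else mfc μ (s' + μ i - 1) ((t - u) - Pi.single i 1))
        = ∑ i, (if t i = 0 then 0 else mfc μ (r + s' + μ i - 1) (t - Pi.single i 1)) := by
      have swap1 : ∀ u, mfc μ r u * (∑ i, if (t - u : Fin k → ℕ) i = 0 then 0
            else mfc μ (s' + μ i - 1) ((t - u) - Pi.single i 1))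
          = ∑ i, (if (t - u : Fin k → ℕ) i = 0 then 0
            else mfc μ r u * mfc μ (s' + μ i - 1) ((t - Pi.single i 1) - u)) := by
        intro u
        rw [Finset.mul_sum]
        refine Finset.sum_congr rfl fun i _ => ?_
        rw [mul_ite, mul_zero, sub_sub_single_comm]
      rw [Finset.sum_congr rfl fun u _ => swap1 u, Finset.sum_comm]
      refine Finset.sum_congr rfl fun i _ => ?_
      by_cases hi : t i = 0
      · rw [if_pos hi]
        apply Finset.sum_eq_zero
        intro u hu
        rw [Finset.mem_Iic] at hu
        have hz : (t - u : Fin k → ℕ) i = 0 := by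
          have h2 : u i ≤ t i := hu i
          rw [Pi.sub_apply]; omega
        rw [if_pos hz]
      · rw [if_neg hi, sum_Iic_sub_single hi]
        have hlt : (∑ l, (t - Pi.single i 1 : Fin k → ℕ) l) < n := by
          rw [sum_sub_single hi]
          have h1 : 1 ≤ ∑ l, t l := le_trans (Nat.one_le_iff_ne_zero.mpr hi)
            (Finset.single_le_sum (fun _ _ => Nat.zero_le _) (Finset.mem_univ i))
          omega
        rw [← IH _ hlt _ rfl (s' + μ i - 1)]
        congr 1
        ring
    calc (∑ u ∈ Finset.Iic t, mfc μ r u * mfc μ s' (t - u)) - mfc μ (r + s') t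
        = (∑ u ∈ Finset.Iic t, (mfc μ r u * mfc μ (s' - 1) (t - u)
            + mfc μ r u * (∑ i, if (t - u : Fin k → ℕ) i = 0 then 0
              else mfc μ (s' + μ i - 1) ((t - u) - Pi.single i 1))))
          - (mfc μ (r + s' - 1) t
            + ∑ i, (if t i = 0 then 0 else mfc μ (r + s' + μ i - 1) (t - Pi.single i 1))) := by
          rw [← mfc_rec μ (r + s') t]
          congr 1
          refine Finset.sum_congr rfl fun u _ => ?_
          rw [← mul_add, ← mfc_rec μ s' (t - u)]
      _ = (∑ u ∈ Finset.Iic t, mfc μ r u * mfc μ (s' - 1) (t - u)) - mfc μ (r + (s' - 1)) t := by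
          rw [Finset.sum_add_distrib, main, show r + (s' - 1) = r + s' - 1 from by ring]
          ring
  set Q : Polynomial ℂ :=
    (∑ u ∈ Finset.Iic t, Polynomial.C (mfc μ r u) * mp μ 0 (t - u)) - mp μ r t with hQ
  have hQe : ∀ s' : ℂ, Q.eval s'
      = (∑ u ∈ Finset.Iic t, mfc μ r u * mfc μ s' (t - u)) - mfc μ (r + s') t := by
    intro s'
    rw [hQ, Polynomial.eval_sub, Polynomial.eval_finset_sum, mp_eval]
    congr 1
    refine Finset.sum_congr rfl fun u _ => ?_
    rw [Polynomial.eval_mul, Polynomial.eval_C, mp_eval, zero_add]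
  have hper : ∀ s' : ℂ, Q.eval s' = Q.eval (s' - 1) := fun s' => by
    rw [hQe, hQe]; exact key s'
  have hconst := poly_eval_const Q hper s
  rw [hQe, hQe] at hconst
  have hz0 : (∑ u ∈ Finset.Iic t, mfc μ r u * mfc μ 0 (t - u)) - mfc μ (r + 0) t = 0 := by
    rw [h0]; ring
  rw [hz0] at hconst
  exact (sub_eq_zero.mp hconst).symm
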